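/- Let a : ℝ → ℝ be continuous and locally integrable and (c_k)_{k∈ℤ} a real sequence with c_k ∉ {0,1} for all k. Let z be a solution of the impulsive differential equation with piecewise constant argument z'(t) = a(t)·(z(t) − z(⌊t⌋)) for t ≠ k, z(k) = c_k·z(k⁻) for k ∈ ℤ, with initial value z(τ) at τ; that is, z is continuous on each [k, k+1) with left-hand limit z(k⁻) at each integer k, satisfies z'(t) = a(t)·(z(t) − z(k)) on each (k, k+1) (with one-sided derivative at k), and z(k) = c_k·z(k⁻). Then for all t ≥ τ, z(t) = (∏_{j=⌊τ⌋+1}^{⌊t⌋} c_j) · z(τ), where the empty product equals 1. -/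

import Mathlib

open Filter Topology Set MeasureTheory

/-- If `z` solves the IDEPCA `z'(t) = a(t)·(z(t) − z(⌊t⌋))` for
`t ≠ k`, `z(k) = c_k·z(k⁻)` for `k ∈ ℤ`, with `c_k ∉ {0,1}`, then for all `t ≥ τ`,
`z(t) = (∏_{j=⌊τ⌋+1}^{⌊t⌋} c_j) · z(τ)` (empty product = 1). -/
theorem idepca_cooke_yorke_impulsive_solution
    (a : ℝ → ℝ) (ha : Continuous a)
    (haint : MeasureTheory.LocallyIntegrable a MeasureTheory.volume)
    (c : ℤ → ℝ) (hc0 : ∀ k, c k ≠ 0) (hc1 : ∀ k, c k ≠ 1)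
    (τ : ℝ) (z : ℝ → ℝ) (zl : ℤ → ℝ)
    -- z is continuous on each interval [k, k+1)
    (hcont : ∀ k : ℤ, ContinuousOn z (Set.Ico (k : ℝ) ((k : ℝ) + 1)))
    -- left-hand limit z(k⁻) = zl k at each integer k
    (hlim : ∀ k : ℤ, Tendsto z (𝓝[<] (k : ℝ)) (𝓝 (zl k)))
    -- impulse condition z(k) = c_k·z(k⁻)
    (hjump : ∀ k : ℤ, z (k : ℝ) = c k * zl k)
    -- the differential equation z'(t) = a(t)·(z(t) − z(k)) on each (k, k+1)
    (hderiv : ∀ k : ℤ, ∀ t ∈ Set.Ioo (k : ℝ) ((k : ℝ) + 1),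
      HasDerivAt z (a t * (z t - z (k : ℝ))) t)
    -- one-sided (right) derivative at the endpoint t = k
    (hderiv' : ∀ k : ℤ,
      HasDerivWithinAt z (a (k : ℝ) * (z (k : ℝ) - z (k : ℝ))) (Set.Ici (k : ℝ)) (k : ℝ)) :
    ∀ t : ℝ, τ ≤ t →
      z t = (∏ j ∈ Finset.Icc (⌊τ⌋ + 1) ⌊t⌋, c j) * z τ := by
  -- Step 1: z is constant on each [k, k+1)
  have hconst : ∀ k : ℤ, ∀ s ∈ Set.Ico (k : ℝ) ((k : ℝ) + 1), z s = z (k : ℝ) := by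
    intro k s hs
    set A : ℝ → ℝ := fun t => ∫ x in (k : ℝ)..t, a x with hA_def
    have hA : ∀ t : ℝ, HasDerivAt A (a t) t := by
      intro t
      exact intervalIntegral.integral_hasDerivAt_right
        (ha.intervalIntegrable _ _)
        (ha.stronglyMeasurableAtFilter _ _)
        ha.continuousAt
    set g : ℝ → ℝ := fun t => (z t - z (k : ℝ)) * Real.exp (-(A t)) with hg_def
    have hAcont : Continuous A := continuous_iff_continuousAt.2 fun t => (hA t).continuousAt
    have hIcc_sub : Set.Icc (k : ℝ) s ⊆ Set.Ico (k : ℝ) ((k : ℝ) + 1) := by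
      intro x hx
      exact ⟨hx.1, lt_of_le_of_lt hx.2 hs.2⟩
    have hgcont : ContinuousOn g (Set.Icc (k : ℝ) s) := by
      apply ContinuousOn.mul
      · exact ((hcont k).mono hIcc_sub).sub continuousOn_const
      · exact ((Real.continuous_exp.comp hAcont.neg).continuousOn)
    have hgderiv : ∀ x ∈ Set.Ico (k : ℝ) s, HasDerivWithinAt g 0 (Set.Ici x) x := by
      intro x hx
      have hzx : HasDerivWithinAt z (a x * (z x - z (k : ℝ))) (Set.Ici x) x := by
        rcases eq_or_lt_of_le hx.1 with h | h
        · subst h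
          exact hderiv' k
        · exact (hderiv k x ⟨h, lt_of_lt_of_le hx.2 hs.2.le⟩).hasDerivWithinAt
      have hex : HasDerivWithinAt (fun t => Real.exp (-(A t)))
          (Real.exp (-(A x)) * (-(a x))) (Set.Ici x) x := by
        exact ((((hA x).neg).exp)).hasDerivWithinAt
      have := (hzx.sub_const (z (k : ℝ))).mul hex
      exact this.congr_deriv (by ring)
    have hkey := constant_of_has_deriv_right_zero hgcont hgderiv s ⟨hs.1, le_refl s⟩
    have hgk : g (k : ℝ) = 0 := by simp [hg_def]
    rw [hgk] at hkey
    have hexp := Real.exp_ne_zero (-(A s))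
    have : (z s - z (k : ℝ)) * Real.exp (-(A s)) = 0 := hkey
    rcases mul_eq_zero.1 this with h | h
    · linarith [sub_eq_zero.1 h]
    · exact absurd h hexp
  -- Step 2: zl (k+1) = z k
  have hzl : ∀ k : ℤ, zl (k + 1) = z (k : ℝ) := by
    intro k
    have h1 : Tendsto z (𝓝[<] ((k : ℝ) + 1)) (𝓝 (z (k : ℝ))) := by
      apply Tendsto.congr' _ tendsto_const_nhds
      have hmem : Set.Ioo (k : ℝ) ((k : ℝ) + 1) ∈ 𝓝[<] ((k : ℝ) + 1) := by
        apply Ioo_mem_nhdsLT_of_mem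
        constructor
        · linarith
        · exact le_refl _
      filter_upwards [hmem] with x hx
      exact (hconst k x ⟨hx.1.le, hx.2⟩).symm
    have h2 := hlim (k + 1)
    have hcast : ((k + 1 : ℤ) : ℝ) = (k : ℝ) + 1 := by push_cast; ring
    rw [hcast] at h2
    exact tendsto_nhds_unique h2 h1
  -- Step 3: z (k+1) = c (k+1) * z k
  have hstep : ∀ k : ℤ, z (((k : ℝ)) + 1) = c (k + 1) * z (k : ℝ) := by
    intro k
    have := hjump (k + 1)
    have hcast : ((k + 1 : ℤ) : ℝ) = (k : ℝ) + 1 := by push_cast; ring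
    rw [hcast, hzl k] at this
    exact this
  -- Step 4: induction
  have hkey : ∀ m n : ℤ, m ≤ n →
      z (n : ℝ) = (∏ j ∈ Finset.Icc (m + 1) n, c j) * z (m : ℝ) := by
    intro m n hmn
    refine Int.le_induction (motive := fun n _ => z (n : ℝ) = (∏ j ∈ Finset.Icc (m + 1) n, c j) * z (m : ℝ)) ?_ ?_ n hmn
    · simp
    · intro n hn ih
      have hcast : ((n + 1 : ℤ) : ℝ) = (n : ℝ) + 1 := by push_cast; ring
      have hins : Finset.Icc (m + 1) (n + 1) = insert (n + 1) (Finset.Icc (m + 1) n) := by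
        ext x; simp only [Finset.mem_Icc, Finset.mem_insert]; omega
      have hnm : (n + 1) ∉ Finset.Icc (m + 1) n := by
        simp only [Finset.mem_Icc]; omega
      rw [hcast, hstep n, ih, hins, Finset.prod_insert hnm]
      ring
  -- conclude
  intro t ht
  have hfl : (↑⌊t⌋ : ℝ) ≤ t ∧ t < (↑⌊t⌋ : ℝ) + 1 := ⟨Int.floor_le t, Int.lt_floor_add_one t⟩
  have hzt : z t = z ((⌊t⌋ : ℤ) : ℝ) := hconst ⌊t⌋ t ⟨hfl.1, hfl.2⟩
  have hzτ : z τ = z ((⌊τ⌋ : ℤ) : ℝ) :=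
    hconst ⌊τ⌋ τ ⟨Int.floor_le τ, Int.lt_floor_add_one τ⟩
  rw [hzt, hzτ, hkey ⌊τ⌋ ⌊t⌋ (Int.floor_le_floor ht)]
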